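/- For the Kendall renewal process, the second moment satisfies E N(t)² = 2 Σ_{n≥1} n F_n(t) − Σ_{n≥1} F_n(t) = [ t^{-α} H(t)(1 + 3G(t)) + G(t)(1 - G(t)²) ] / (1 - G(t))³ whenever G(t) < 1. -/

import Mathlib

open MeasureTheory Real Filter Set

/-- Second moment of the Kendall renewal counting variable:
`E N(t)² = Σ n² (F_n(t) - F_{n+1}(t)) = 2 Σ_{n≥1} n F_n(t) - Σ_{n≥1} F_n(t)`
with explicit value. -/
theorem kendall_renewal_second_moment
    (α : ℝ) (hα : 0 < α) (t : ℝ) (ht : 0 < t)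
    (G H : ℝ → ℝ) (Fn : ℕ → ℝ) (hF0 : Fn 0 = 1)
    (hFn : ∀ n : ℕ, Fn (n + 1) = G t ^ n * (((n : ℝ) + 1) * t ^ (-α) * H t + G t))
    (hG0 : 0 ≤ G t) (hG1 : G t < 1) (hH0 : 0 ≤ H t) :
    (∑' n : ℕ, (n : ℝ) ^ 2 * (Fn n - Fn (n + 1))
      = 2 * (∑' n : ℕ, ((n : ℝ) + 1) * Fn (n + 1)) - ∑' n : ℕ, Fn (n + 1)) ∧
    (∑' n : ℕ, (n : ℝ) ^ 2 * (Fn n - Fn (n + 1))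
      = (t ^ (-α) * H t * (1 + 3 * G t) + G t * (1 - G t ^ 2)) / (1 - G t) ^ 3) := by
  set g : ℝ := G t with hg
  set h : ℝ := t ^ (-α) * H t with hh
  have hr : ‖g‖ < 1 := by rw [Real.norm_eq_abs, abs_of_nonneg hG0]; exact hG1
  have hA : (1 : ℝ) - g ≠ 0 := by linarith
  -- basic geometric-type sums
  have h0 : HasSum (fun n : ℕ => g ^ n) (1 / (1 - g)) := by
    simpa [one_div] using hasSum_geometric_of_lt_one hG0 hG1
  have h1 : HasSum (fun n : ℕ => ((n : ℝ) + 1) * g ^ n) (1 / (1 - g) ^ 2) := by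
    have := hasSum_choose_mul_geometric_of_norm_lt_one (𝕜 := ℝ) 1 hr
    convert this using 2 with n
    · rfl
    simp [Nat.choose_one_right]
  have h2 : HasSum (fun n : ℕ => ((n : ℝ) + 1) * ((n : ℝ) + 2) / 2 * g ^ n)
      (1 / (1 - g) ^ 3) := by
    have := hasSum_choose_mul_geometric_of_norm_lt_one (𝕜 := ℝ) 2 hr
    convert this using 2 with n
    · rfl
    rw [Nat.cast_choose_two]
    push_cast
    ring
  have h2' : HasSum (fun n : ℕ => ((n : ℝ) + 1) * ((n : ℝ) + 2) * g ^ n)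
      (2 / (1 - g) ^ 3) := by
    have H := h2.mul_left 2
    convert H using 1
    · rfl
    · funext n; ring
    · ring
  -- sum of (n+1)^2 g^n
  have hsq : HasSum (fun n : ℕ => ((n : ℝ) + 1) ^ 2 * g ^ n)
      (2 / (1 - g) ^ 3 - 1 / (1 - g) ^ 2) := by
    have H := h2'.sub h1
    convert H using 1
    · rfl
    funext n; ring
  -- sums of F_{n+1} and (n+1) F_{n+1}
  have hsumF : HasSum (fun n : ℕ => Fn (n + 1))
      (h * (1 / (1 - g) ^ 2) + g * (1 / (1 - g))) := by
    have H := (h1.mul_left h).add (h0.mul_left g)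
    convert H using 1
    · rfl
    funext n; rw [hFn n]; ring
  have hsumNF : HasSum (fun n : ℕ => ((n : ℝ) + 1) * Fn (n + 1))
      (h * (2 / (1 - g) ^ 3 - 1 / (1 - g) ^ 2) + g * (1 / (1 - g) ^ 2)) := by
    have H := (hsq.mul_left h).add (h1.mul_left g)
    convert H using 1
    · rfl
    funext n; rw [hFn n]; ring
  set S1 : ℝ := h * (1 / (1 - g) ^ 2) + g * (1 / (1 - g)) with hS1
  set S2 : ℝ := h * (2 / (1 - g) ^ 3 - 1 / (1 - g) ^ 2) + g * (1 / (1 - g) ^ 2) with hS2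
  -- summability of n^2 * F_{n+1}
  have hc : Summable (fun n : ℕ => (n : ℝ) ^ 2 * Fn (n + 1)) := by
    have s2 := summable_pow_mul_geometric_of_norm_lt_one (R := ℝ) 2 hr
    have s3 := summable_pow_mul_geometric_of_norm_lt_one (R := ℝ) 3 hr
    have : Summable (fun n : ℕ =>
        h * ((n : ℝ) ^ 3 * g ^ n) + h * ((n : ℝ) ^ 2 * g ^ n) + g * ((n : ℝ) ^ 2 * g ^ n)) :=
      ((s3.mul_left h).add (s2.mul_left h)).add (s2.mul_left g)
    apply this.congr
    intro n
    rw [hFn n]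
    ring
  set Sc : ℝ := ∑' n : ℕ, (n : ℝ) ^ 2 * Fn (n + 1) with hSc
  have hcs : HasSum (fun n : ℕ => (n : ℝ) ^ 2 * Fn (n + 1)) Sc := hc.hasSum
  -- HasSum of (n+1)^2 F_{n+1}
  have hb1 : HasSum (fun n : ℕ => ((n : ℝ) + 1) ^ 2 * Fn (n + 1)) (Sc + (2 * S2 - S1)) := by
    have hd : HasSum (fun n : ℕ => 2 * (((n : ℝ) + 1) * Fn (n + 1)) - Fn (n + 1))
        (2 * S2 - S1) := (hsumNF.mul_left 2).sub hsumF
    have H := hcs.add hd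
    convert H using 1
    funext n; ring
  -- shift to get HasSum of n^2 F_n
  have hb : HasSum (fun n : ℕ => (n : ℝ) ^ 2 * Fn n) (Sc + (2 * S2 - S1)) := by
    have hb1' : HasSum (fun n : ℕ => ((n + 1 : ℕ) : ℝ) ^ 2 * Fn (n + 1))
        (Sc + (2 * S2 - S1)) := by
      convert hb1 using 1
      funext n; push_cast; ring
    have := (hasSum_nat_add_iff (f := fun n : ℕ => (n : ℝ) ^ 2 * Fn n) 1).mp hb1'
    simpa using this
  have ha : HasSum (fun n : ℕ => (n : ℝ) ^ 2 * (Fn n - Fn (n + 1))) (2 * S2 - S1) := by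
    have H := hb.sub hcs
    convert H using 1
    · rfl
    · funext n; ring
    · ring
  refine ⟨?_, ?_⟩
  · rw [ha.tsum_eq, hsumNF.tsum_eq, hsumF.tsum_eq]
  · rw [ha.tsum_eq, hS2, hS1, hh]
    field_simp
    ring
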